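/- There exists a constant c_G > 0 such that for every C > c_G the integral ∫_G exp(−C·d(g)) dμ(g) is finite. -/

import Mathlib

open MeasureTheory

open scoped Pointwise ENNReal

/-- There exists a constant `c_G > 0` such that for every `C > c_G` the
integral `∫_G exp (-C * d g) dμ(g)` is finite. -/
theorem exp_neg_dist_integrable {G : Type*} [Group G] [MetricSpace G]
    [IsTopologicalGroup G] [ProperSpace G]
    [MeasurableSpace G] [BorelSpace G]
    (hinv : ∀ g x y : G, dist (g * x) (g * y) = dist x y)
    (hcoarse : ∀ x y : G, ∀ ε > (0 : ℝ), ∃ (m : ℕ) (z : ℕ → G),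
      z 0 = x ∧ z m = y ∧ (∀ i < m, dist (z i) (z (i + 1)) ≤ ε) ∧
      (m : ℝ) ≤ dist x y / ε + 2)
    (μ : Measure G) [μ.IsHaarMeasure] :
    ∃ c_G > (0 : ℝ), ∀ C : ℝ, C > c_G →
      Integrable (fun g : G => Real.exp (-(C * dist g 1))) μ := by
  classical
  set S : Set G := Metric.closedBall (1:G) 1 with hSdef
  have hScomp : IsCompact S := isCompact_closedBall _ _
  have h1S : (1:G) ∈ S := Metric.mem_closedBall_self zero_le_one
  have hSS : IsCompact (S * S) := hScomp.mul hScomp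
  -- finite cover of S * S by left translates of S
  obtain ⟨t, ht⟩ : ∃ t : Finset G, S * S ⊆ ⋃ g ∈ t, g • Metric.ball (1:G) 1 := by
    apply hSS.elim_finite_subcover (fun g : G => g • Metric.ball (1:G) 1)
    · intro g; exact Metric.isOpen_ball.smul g
    · intro x hx
      exact Set.mem_iUnion.2 ⟨x, ⟨1, Metric.mem_ball_self one_pos, by simp⟩⟩
  have htS : S * S ⊆ ⋃ g ∈ t, g • S := by
    refine ht.trans ?_
    exact Set.iUnion₂_mono fun g _ => Set.smul_set_mono Metric.ball_subset_closedBall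
  set N : ℕ := t.card with hNdef
  have hN1 : 1 ≤ N := by
    have h1 : (1:G) ∈ S * S := by simpa using Set.mul_mem_mul h1S h1S
    obtain ⟨g, hg, -⟩ := Set.mem_iUnion₂.1 (htS h1)
    exact Finset.card_pos.2 ⟨g, hg⟩
  -- exponential growth of powers of S
  have key : ∀ m : ℕ, μ (S ^ (m+1)) ≤ (N : ℝ≥0∞) ^ m * μ S := by
    intro m
    induction m with
    | zero => simp
    | succ m ih =>
      have hsub : S ^ (m+2) ⊆ ⋃ g ∈ t, g • S ^ (m+1) := by
        intro x hx
        have hx' : x ∈ (S * S) * S ^ m := by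
          rw [show m + 2 = 2 + m by omega, pow_add, sq] at hx
          exact hx
        obtain ⟨a, ha, b, hb, rfl⟩ := hx'
        obtain ⟨g, hg, hag⟩ := Set.mem_iUnion₂.1 (htS ha)
        obtain ⟨s, hs, rfl⟩ := hag
        refine Set.mem_iUnion₂.2 ⟨g, hg, ⟨s * b, ?_, ?_⟩⟩
        · rw [pow_succ']
          exact Set.mul_mem_mul hs hb
        · simp [smul_eq_mul, mul_assoc]
      calc μ (S ^ (m+2)) ≤ ∑ g ∈ t, μ (g • S ^ (m+1)) :=
            (measure_mono hsub).trans (measure_biUnion_finset_le t _)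
        _ = ∑ g ∈ t, μ (S ^ (m+1)) := by
            refine Finset.sum_congr rfl fun g _ => ?_
            exact measure_smul μ g _
        _ = (N : ℝ≥0∞) * μ (S ^ (m+1)) := by
            rw [Finset.sum_const, nsmul_eq_mul]
        _ ≤ (N : ℝ≥0∞) * ((N : ℝ≥0∞) ^ m * μ S) := by gcongr
        _ = (N : ℝ≥0∞) ^ (m+1) * μ S := by ring
  -- balls are contained in powers of S
  have hchain : ∀ r : ℝ, Metric.closedBall (1:G) r ⊆ S ^ (⌈r⌉₊ + 2) := by
    intro r g hg
    rw [Metric.mem_closedBall] at hg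
    have hr0 : (0:ℝ) ≤ r := le_trans dist_nonneg hg
    obtain ⟨m, z, hz0, hzm, hstep, hm⟩ := hcoarse 1 g 1 one_pos
    have hmle : m ≤ ⌈r⌉₊ + 2 := by
      have h1 : (m:ℝ) ≤ (⌈r⌉₊ : ℝ) + 2 := by
        calc (m:ℝ) ≤ dist 1 g / 1 + 2 := hm
          _ = dist g 1 + 2 := by rw [div_one, dist_comm]
          _ ≤ (⌈r⌉₊:ℝ) + 2 := by
              have := hg.trans (Nat.le_ceil r)
              linarith
      exact_mod_cast h1
    have hz : ∀ k, k ≤ m → z k ∈ S ^ k := by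
      intro k
      induction k with
      | zero => intro _; simp [hz0]
      | succ k ih =>
        intro hk
        have hzk := ih (by omega)
        have hstep' := hstep k (by omega)
        have hmem : (z k)⁻¹ * z (k+1) ∈ S := by
          have h := hinv (z k) ((z k)⁻¹ * z (k+1)) 1
          rw [mul_inv_cancel_left, mul_one] at h
          rw [hSdef, Metric.mem_closedBall, ← h, dist_comm]
          exact hstep'
        have hzz : z (k+1) = z k * ((z k)⁻¹ * z (k+1)) := by group
        rw [hzz, pow_succ]
        exact Set.mul_mem_mul hzk hmem
    have hgm : g ∈ S ^ m := hzm ▸ hz m le_rfl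
    exact Set.pow_subset_pow_right h1S hmle hgm
  have hball : ∀ n : ℕ, μ (Metric.closedBall (1:G) ((n:ℝ)+1)) ≤ (N:ℝ≥0∞) ^ (n+2) * μ S := by
    intro n
    have h1 : μ (Metric.closedBall (1:G) ((n:ℝ)+1)) ≤ μ (S ^ (⌈(n:ℝ)+1⌉₊ + 2)) := measure_mono (hchain ((n:ℝ)+1))
    have hceil : ⌈(n:ℝ)+1⌉₊ = n + 1 := by
      rw [show (n:ℝ)+1 = ((n+1:ℕ):ℝ) by push_cast; ring, Nat.ceil_natCast]
    rw [hceil] at h1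
    exact h1.trans (key (n+2))
  -- the constant
  refine ⟨Real.log N + 1, by positivity, ?_⟩
  intro C hC
  have hlogN : (0:ℝ) ≤ Real.log N := Real.log_natCast_nonneg N
  have hC0 : (0:ℝ) < C := lt_of_le_of_lt (by linarith) hC
  have hcont : Continuous fun g : G => Real.exp (-(C * dist g 1)) := by
    continuity
  refine ⟨hcont.aestronglyMeasurable, ?_⟩
  rw [hasFiniteIntegral_iff_ofReal (Filter.Eventually.of_forall fun g => (Real.exp_pos _).le)]
  set ρ : ℝ≥0∞ := ENNReal.ofReal (Real.exp (-C)) with hρdef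
  set A : ℕ → Set G := fun n => Metric.ball (1:G) ((n:ℝ)+1) \ Metric.ball (1:G) (n:ℝ) with hAdef
  have hA : ∀ n, MeasurableSet (A n) :=
    fun n => Metric.isOpen_ball.measurableSet.diff Metric.isOpen_ball.measurableSet
  have hAsub : ∀ n, A n ⊆ Metric.closedBall (1:G) ((n:ℝ)+1) :=
    fun n => Set.diff_subset.trans Metric.ball_subset_closedBall
  have hpt : ∀ g : G, ENNReal.ofReal (Real.exp (-(C * dist g 1)))
      ≤ ∑' n, (A n).indicator (fun _ => ρ ^ n) g := by
    intro g
    set d : ℝ := dist g 1 with hd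
    have hd0 : 0 ≤ d := dist_nonneg
    set n : ℕ := ⌊d⌋₊ with hn
    have hgA : g ∈ A n := by
      constructor
      · rw [Metric.mem_ball, ← hd]
        exact Nat.lt_floor_add_one d
      · rw [Metric.mem_ball, ← hd]
        exact not_lt.2 (Nat.floor_le hd0)
    have hterm : ENNReal.ofReal (Real.exp (-(C * d))) ≤ (A n).indicator (fun _ => ρ ^ n) g := by
      rw [Set.indicator_of_mem hgA, hρdef, ← ENNReal.ofReal_pow (Real.exp_pos _).le,
        ← Real.exp_nat_mul]
      apply ENNReal.ofReal_le_ofReal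
      apply Real.exp_le_exp.2
      have : (n:ℝ) ≤ d := Nat.floor_le hd0
      nlinarith
    exact hterm.trans (ENNReal.le_tsum n)
  have hρN : ρ * (N:ℝ≥0∞) < 1 := by
    have hN0 : (0:ℝ) < N := by exact_mod_cast hN1
    have : ρ * (N:ℝ≥0∞) = ENNReal.ofReal (Real.exp (-C) * N) := by
      rw [ENNReal.ofReal_mul (Real.exp_pos _).le, ENNReal.ofReal_natCast]
    rw [this]
    apply ENNReal.ofReal_lt_one.2
    calc Real.exp (-C) * N = Real.exp (-C) * Real.exp (Real.log N) := by
          rw [Real.exp_log hN0]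
      _ = Real.exp (Real.log N - C) := by rw [← Real.exp_add]; ring_nf
      _ < Real.exp 0 := Real.exp_lt_exp.2 (by linarith)
      _ = 1 := Real.exp_zero
  have hμS : μ S < ⊤ := hScomp.measure_lt_top
  calc ∫⁻ g, ENNReal.ofReal (Real.exp (-(C * dist g 1))) ∂μ
      ≤ ∫⁻ g, ∑' n, (A n).indicator (fun _ => ρ ^ n) g ∂μ := lintegral_mono hpt
    _ = ∑' n, ∫⁻ g, (A n).indicator (fun _ => ρ ^ n) g ∂μ :=
        lintegral_tsum fun n => (measurable_const.indicator (hA n)).aemeasurable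
    _ = ∑' n, ρ ^ n * μ (A n) := by
        refine tsum_congr fun n => ?_
        rw [lintegral_indicator_const (hA n)]
    _ ≤ ∑' n, ρ ^ n * ((N:ℝ≥0∞) ^ (n+2) * μ S) := by
        refine ENNReal.tsum_le_tsum fun n => ?_
        gcongr
        exact (measure_mono (hAsub n)).trans (hball n)
    _ = ∑' n, (ρ * N) ^ n * ((N:ℝ≥0∞) ^ 2 * μ S) := by
        refine tsum_congr fun n => ?_
        ring
    _ = (1 - ρ * N)⁻¹ * ((N:ℝ≥0∞) ^ 2 * μ S) := by
        rw [ENNReal.tsum_mul_right, ENNReal.tsum_geometric]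
    _ < ⊤ := by
        apply ENNReal.mul_lt_top
        · exact ENNReal.inv_lt_top.2 (tsub_pos_of_lt hρN)
        · exact ENNReal.mul_lt_top (by simp [ENNReal.pow_lt_top, ENNReal.natCast_lt_top]) hμS
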